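/- arXiv:2605.30825 — 3 statements merged into one kernel-verified Lean document; each statement's English description precedes it below -/
import Mathlib

section
/- Let p and q be probability mass functions on a finite set X with q(x) > 0 for all x, and let λ ∈ [0,1) be a real number with unlearning distribution q_u(x) > 0 for all x. Define the tilted distribution p*(x) = (q(x)^{1/(1-λ)} / q_u(x)^{λ/(1-λ)}) / Z where Z is the normalizing constant. Then p* minimizes the function L(p) = D_KL(p‖q) − λ·D_KL(p‖q_u) over all probability mass functions p on X. -/
open Real BigOperators

noncomputable section

variable {X : Type*} [Fintype X]

/-- `p` is a probability mass function on the finite set `X`. -/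
def IsPMF (p : X → ℝ) : Prop := (∀ x, 0 ≤ p x) ∧ ∑ x, p x = 1

/-- KL divergence with the convention `0 · log 0 = 0` (automatic since `Real.log 0 = 0`). -/
def klDiv (p q : X → ℝ) : ℝ := ∑ x, p x * Real.log (p x / q x)

lemma gibbs (p r : X → ℝ) (hp : IsPMF p) (hr : IsPMF r) (hrpos : ∀ x, 0 < r x) :
    0 ≤ klDiv p r := by
  have key : ∀ x, p x * Real.log (r x / p x) ≤ r x - p x := by
    intro x
    rcases eq_or_lt_of_le (hp.1 x) with h | h
    · simp [← h, (hrpos x).le]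
    · have ht : 0 < r x / p x := div_pos (hrpos x) h
      have := Real.log_le_sub_one_of_pos ht
      calc p x * Real.log (r x / p x) ≤ p x * (r x / p x - 1) := by
            exact mul_le_mul_of_nonneg_left this (hp.1 x)
        _ = r x - p x := by field_simp
  have hsum : ∑ x, p x * Real.log (r x / p x) ≤ 0 := by
    calc ∑ x, p x * Real.log (r x / p x) ≤ ∑ x, (r x - p x) :=
          Finset.sum_le_sum fun x _ => key x
      _ = 0 := by rw [Finset.sum_sub_distrib, hp.2, hr.2]; ring
  have heq : klDiv p r = -∑ x, p x * Real.log (r x / p x) := by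
    rw [klDiv, ← Finset.sum_neg_distrib]
    apply Finset.sum_congr rfl
    intro x _
    rcases eq_or_lt_of_le (hp.1 x) with h | h
    · simp [← h]
    · rw [Real.log_div (hrpos x).ne' h.ne', Real.log_div h.ne' (hrpos x).ne']
      ring
  linarith

theorem stmt0 [Nonempty X] (q qu : X → ℝ)
    (hq : IsPMF q) (hqpos : ∀ x, 0 < q x)
    (hqu : IsPMF qu) (hqupos : ∀ x, 0 < qu x)
    (lam : ℝ) (hlam0 : 0 ≤ lam) (hlam1 : lam < 1)
    (Z : ℝ) (hZ : Z = ∑ x, q x ^ (1 / (1 - lam)) / qu x ^ (lam / (1 - lam)))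
    (pstar : X → ℝ)
    (hpstar : ∀ x, pstar x = (q x ^ (1 / (1 - lam)) / qu x ^ (lam / (1 - lam))) / Z) :
    IsPMF pstar ∧
      ∀ p : X → ℝ, IsPMF p →
        klDiv pstar q - lam * klDiv pstar qu ≤ klDiv p q - lam * klDiv p qu := by
  have hl : (0:ℝ) < 1 - lam := by linarith
  have hrpos : ∀ x, 0 < q x ^ (1 / (1 - lam)) / qu x ^ (lam / (1 - lam)) := fun x =>
    div_pos (Real.rpow_pos_of_pos (hqpos x) _) (Real.rpow_pos_of_pos (hqupos x) _)
  have hZpos : 0 < Z := by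
    rw [hZ]
    exact Finset.sum_pos (fun x _ => hrpos x) Finset.univ_nonempty
  have hppos : ∀ x, 0 < pstar x := fun x => by
    rw [hpstar x]; exact div_pos (hrpos x) hZpos
  have hpsum : ∑ x, pstar x = 1 := by
    have : ∑ x, pstar x = (∑ x, q x ^ (1 / (1 - lam)) / qu x ^ (lam / (1 - lam))) / Z := by
      rw [Finset.sum_div]
      exact Finset.sum_congr rfl fun x _ => hpstar x
    rw [this, ← hZ, div_self hZpos.ne']
  have hpstarPMF : IsPMF pstar := ⟨fun x => (hppos x).le, hpsum⟩
  -- log of pstar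
  have hlog : ∀ x, (1 - lam) * Real.log (pstar x) =
      Real.log (q x) - lam * Real.log (qu x) - (1 - lam) * Real.log Z := by
    intro x
    rw [hpstar x, Real.log_div (hrpos x).ne' hZpos.ne',
      Real.log_div (Real.rpow_pos_of_pos (hqpos x) _).ne'
        (Real.rpow_pos_of_pos (hqupos x) _).ne',
      Real.log_rpow (hqpos x), Real.log_rpow (hqupos x)]
    field_simp
  -- key identity
  have key : ∀ p : X → ℝ, IsPMF p →
      klDiv p q - lam * klDiv p qu = (1 - lam) * klDiv p pstar - (1 - lam) * Real.log Z := by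
    intro p hp
    have : ∀ x, p x * Real.log (p x / q x) - lam * (p x * Real.log (p x / qu x)) =
        (1 - lam) * (p x * Real.log (p x / pstar x)) - (1 - lam) * (p x * Real.log Z) := by
      intro x
      rcases eq_or_lt_of_le (hp.1 x) with h | h
      · simp [← h]
      · rw [Real.log_div h.ne' (hqpos x).ne', Real.log_div h.ne' (hqupos x).ne',
          Real.log_div h.ne' (hppos x).ne']
        have := hlog x
        nlinarith [hlog x]
    calc klDiv p q - lam * klDiv p qu
        = ∑ x, (p x * Real.log (p x / q x) - lam * (p x * Real.log (p x / qu x))) := by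
          rw [klDiv, klDiv, Finset.sum_sub_distrib, Finset.mul_sum]
      _ = ∑ x, ((1 - lam) * (p x * Real.log (p x / pstar x)) - (1 - lam) * (p x * Real.log Z)) :=
          Finset.sum_congr rfl fun x _ => this x
      _ = (1 - lam) * klDiv p pstar - (1 - lam) * Real.log Z := by
          rw [Finset.sum_sub_distrib, klDiv, ← Finset.mul_sum, ← Finset.mul_sum,
            ← Finset.sum_mul, hp.2]
          ring
  refine ⟨hpstarPMF, fun p hp => ?_⟩
  have h1 := key p hp
  have h2 := key pstar hpstarPMF
  have h3 : klDiv pstar pstar = 0 := by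
    unfold klDiv
    apply Finset.sum_eq_zero
    intro x _
    rw [div_self (hppos x).ne', Real.log_one, mul_zero]
  have h4 : 0 ≤ klDiv p pstar := gibbs p pstar hp hpstarPMF hppos
  rw [h1, h2, h3]
  nlinarith
end
end

section
/- Let μ₁, ..., μ_k be finite non-atomic signed measures on a measurable space (Ω, F). Then for every α ∈ [0,1] there exists a measurable set E ∈ F with μ_i(E) = α·μ_i(Ω) for all i = 1, ..., k. (Weak form of Lyapunov's convexity theorem.) -/
open MeasureTheory Set Filter Topology

namespace LyapAux

variable {Ω : Type*} [MeasurableSpace Ω]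

/-- The real value of a measure on a set. -/
noncomputable def rv (σ : Measure Ω) (S : Set Ω) : ℝ := (σ S).toReal

lemma rv_nonneg (σ : Measure Ω) (S : Set Ω) : 0 ≤ rv σ S := ENNReal.toReal_nonneg

lemma rv_empty (σ : Measure Ω) : rv σ (∅ : Set Ω) = 0 := by simp [rv]

lemma rv_mono (σ : Measure Ω) [IsFiniteMeasure σ] {S T : Set Ω} (h : S ⊆ T) :
    rv σ S ≤ rv σ T :=
  ENNReal.toReal_mono (measure_ne_top σ T) (measure_mono h)

lemma rv_union (σ : Measure Ω) [IsFiniteMeasure σ] {S T : Set Ω}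
    (hT : MeasurableSet T) (hd : Disjoint S T) :
    rv σ (S ∪ T) = rv σ S + rv σ T := by
  unfold rv
  rw [measure_union hd hT, ENNReal.toReal_add (measure_ne_top σ S) (measure_ne_top σ T)]

lemma rv_diff (σ : Measure Ω) [IsFiniteMeasure σ] {S T : Set Ω}
    (hT : MeasurableSet T) (h : T ⊆ S) :
    rv σ (S \ T) = rv σ S - rv σ T := by
  have h1 : rv σ (T ∪ S \ T) = rv σ T + rv σ (S \ T) := by
    rw [Set.union_comm]
    rw [rv_union σ hT disjoint_sdiff_self_left, add_comm]
  rw [Set.union_diff_cancel h] at h1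
  linarith

lemma rv_iUnion (σ : Measure Ω) [IsFiniteMeasure σ] {f : ℕ → Set Ω} (hm : Monotone f) :
    Tendsto (fun n => rv σ (f n)) atTop (𝓝 (rv σ (⋃ n, f n))) :=
  (ENNReal.tendsto_toReal (measure_ne_top σ _)).comp (tendsto_measure_iUnion_atTop hm)

lemma rv_iInter (σ : Measure Ω) [IsFiniteMeasure σ] {f : ℕ → Set Ω}
    (hf : ∀ n, MeasurableSet (f n)) (hm : Antitone f) :
    Tendsto (fun n => rv σ (f n)) atTop (𝓝 (rv σ (⋂ n, f n))) :=
  (ENNReal.tendsto_toReal (measure_ne_top σ _)).comp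
    (tendsto_measure_iInter_atTop (fun n => (hf n).nullMeasurableSet) hm
      ⟨0, measure_ne_top σ _⟩)

/-- Non-atomicity in the splitting sense, in real form. -/
def NA (σ : Measure Ω) : Prop :=
  ∀ A, MeasurableSet A → 0 < rv σ A →
    ∃ B, B ⊆ A ∧ MeasurableSet B ∧ 0 < rv σ B ∧ rv σ B < rv σ A

/-- Sierpiński property: every value between `0` and `rv σ A` is attained on a subset. -/
def SP (σ : Measure Ω) : Prop :=
  ∀ A, MeasurableSet A → ∀ c : ℝ, 0 ≤ c → c ≤ rv σ A →
    ∃ B, B ⊆ A ∧ MeasurableSet B ∧ rv σ B = c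

lemma small_piece (σ : Measure Ω) [IsFiniteMeasure σ] (hna : NA σ) {A : Set Ω}
    (hA : MeasurableSet A) (hA0 : 0 < rv σ A) {ε : ℝ} (hε : 0 < ε) :
    ∃ B, B ⊆ A ∧ MeasurableSet B ∧ 0 < rv σ B ∧ rv σ B ≤ ε := by
  have key : ∀ n : ℕ, ∃ B, B ⊆ A ∧ MeasurableSet B ∧ 0 < rv σ B ∧
      rv σ B ≤ rv σ A / 2 ^ n := by
    intro n
    induction n with
    | zero => exact ⟨A, subset_rfl, hA, hA0, by simp⟩
    | succ n IH =>
      obtain ⟨B, hBA, hBm, hB0, hBle⟩ := IH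
      obtain ⟨C, hCB, hCm, hC0, hClt⟩ := hna B hBm hB0
      have hsplit : rv σ (B \ C) = rv σ B - rv σ C := rv_diff σ hCm hCB
      have hpow : rv σ A / 2 ^ (n + 1) = rv σ A / 2 ^ n / 2 := by
        rw [pow_succ, ← div_div]
      rcases le_total (rv σ C) (rv σ B / 2) with h | h
      · exact ⟨C, hCB.trans hBA, hCm, hC0, by rw [hpow]; linarith⟩
      · refine ⟨B \ C, (diff_subset).trans hBA, hBm.diff hCm, by linarith, ?_⟩
        rw [hpow]; linarith
  obtain ⟨n, hn⟩ := pow_unbounded_of_one_lt (rv σ A / ε) (one_lt_two (α := ℝ))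
  obtain ⟨B, h1, h2, h3, h4⟩ := key n
  refine ⟨B, h1, h2, h3, h4.trans ?_⟩
  rw [div_le_iff₀ (pow_pos two_pos n)]
  rw [div_lt_iff₀ hε] at hn
  nlinarith [pow_pos (two_pos (α := ℝ)) n]

/-- Sierpiński's theorem. -/
lemma sierpinski (σ : Measure Ω) [IsFiniteMeasure σ] (hna : NA σ) : SP σ := by
  intro A hA c hc0 hcA
  have step : ∀ C : Set Ω, C ⊆ A → MeasurableSet C → rv σ C ≤ c →
      ∃ D, C ⊆ D ∧ D ⊆ A ∧ MeasurableSet D ∧ rv σ D ≤ c ∧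
        ∀ D', D' ⊆ A \ C → MeasurableSet D' → rv σ C + rv σ D' ≤ c →
          rv σ C + rv σ D' / 2 ≤ rv σ D := by
    intro C hCA hCm hCc
    set T : Set ℝ :=
      {x | ∃ D', D' ⊆ A \ C ∧ MeasurableSet D' ∧ rv σ D' = x ∧ rv σ C + x ≤ c} with hT
    have hT0 : (0 : ℝ) ∈ T := ⟨∅, empty_subset _, .empty, rv_empty σ, by simpa using hCc⟩
    have hTne : T.Nonempty := ⟨0, hT0⟩
    have hTbdd : BddAbove T := by
      refine ⟨rv σ A, fun x hx => ?_⟩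
      obtain ⟨D', hD'A, _, rfl, _⟩ := hx
      exact rv_mono σ (hD'A.trans diff_subset)
    set δ := sSup T with hδdef
    have hδ0 : 0 ≤ δ := le_csSup hTbdd hT0
    rcases eq_or_lt_of_le hδ0 with hδ | hδ
    · refine ⟨C, subset_rfl, hCA, hCm, hCc, ?_⟩
      intro D' hD' hD'm hsum
      have h1 : rv σ D' ≤ δ := le_csSup hTbdd ⟨D', hD', hD'm, rfl, hsum⟩
      have h2 := rv_nonneg σ D'
      linarith
    · obtain ⟨x, hxT, hx⟩ := exists_lt_of_lt_csSup hTne (by linarith : δ / 2 < δ)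
      obtain ⟨D'', hD''A, hD''m, rfl, hsum⟩ := hxT
      have hdisj : Disjoint C D'' := disjoint_sdiff_self_right.mono_right hD''A
      have hu : rv σ (C ∪ D'') = rv σ C + rv σ D'' := rv_union σ hD''m hdisj
      refine ⟨C ∪ D'', subset_union_left,
        union_subset hCA (hD''A.trans diff_subset), hCm.union hD''m, by linarith, ?_⟩
      intro D' hD' hD'm hsum'
      have h1 : rv σ D' ≤ δ := le_csSup hTbdd ⟨D', hD', hD'm, rfl, hsum'⟩
      linarith
  choose! D hD1 hD2 hD3 hD4 hD5 using step
  let F : ℕ → Set Ω := fun n => Nat.rec (∅ : Set Ω) (fun _ C => D C) n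
  have hF0 : F 0 = ∅ := rfl
  have hFs : ∀ n, F (n + 1) = D (F n) := fun n => rfl
  have inv : ∀ n, F n ⊆ A ∧ MeasurableSet (F n) ∧ rv σ (F n) ≤ c := by
    intro n
    induction n with
    | zero =>
      refine ⟨empty_subset _, .empty, ?_⟩
      rw [hF0, rv_empty]; exact hc0
    | succ n IH =>
      obtain ⟨h1, h2, h3⟩ := IH
      rw [hFs]
      exact ⟨hD2 _ h1 h2 h3, hD3 _ h1 h2 h3, hD4 _ h1 h2 h3⟩
  have hmono : Monotone F :=
    monotone_nat_of_le_succ (fun n => by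
      rw [hFs]; exact hD1 _ (inv n).1 (inv n).2.1 (inv n).2.2)
  set Cinf := ⋃ n, F n with hCinf
  have hCm : MeasurableSet Cinf := MeasurableSet.iUnion (fun n => (inv n).2.1)
  have hCA : Cinf ⊆ A := iUnion_subset fun n => (inv n).1
  have hlim : Tendsto (fun n => rv σ (F n)) atTop (𝓝 (rv σ Cinf)) := rv_iUnion σ hmono
  have hCc : rv σ Cinf ≤ c := le_of_tendsto hlim (Eventually.of_forall fun n => (inv n).2.2)
  refine ⟨Cinf, hCA, hCm, ?_⟩
  by_contra hne
  have hlt : rv σ Cinf < c := lt_of_le_of_ne hCc hne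
  have hpos : 0 < rv σ (A \ Cinf) := by
    rcases (rv_nonneg σ (A \ Cinf)).lt_or_eq with h | h
    · exact h
    · exfalso
      have hd := rv_diff σ hCm hCA
      linarith
  obtain ⟨D', hD'sub, hD'm, hD'0, hD'le⟩ :=
    small_piece σ hna (hA.diff hCm) hpos (show (0:ℝ) < c - rv σ Cinf by linarith)
  have hgrow : ∀ n, rv σ (F n) + rv σ D' / 2 ≤ rv σ (F (n + 1)) := by
    intro n
    rw [hFs]
    refine hD5 _ (inv n).1 (inv n).2.1 (inv n).2.2 D' ?_ hD'm ?_
    · exact hD'sub.trans (diff_subset_diff_right (subset_iUnion F n))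
    · have h := rv_mono σ (subset_iUnion F n)
      linarith
  have hlin : ∀ n : ℕ, (n : ℝ) * (rv σ D' / 2) ≤ rv σ (F n) := by
    intro n
    induction n with
    | zero => simp [hF0, rv_empty]
    | succ n IH =>
      have h := hgrow n
      push_cast
      linarith
  obtain ⟨n, hn⟩ := exists_nat_gt (c / (rv σ D' / 2))
  have h1 := hlin n
  have h2 := (inv n).2.2
  have h3 : 0 < rv σ D' / 2 := by linarith
  rw [div_lt_iff₀ h3] at hn
  linarith

/-- simultaneous halving property for a family. -/
def Half {m : ℕ} (ν : Fin m → Measure Ω) : Prop :=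
  ∀ A, MeasurableSet A → ∃ B, B ⊆ A ∧ MeasurableSet B ∧
    ∀ j, rv (ν j) B = rv (ν j) A / 2

/-- simultaneous monotone family property. -/
def Fam {m : ℕ} (ν : Fin m → Measure Ω) : Prop :=
  ∀ A, MeasurableSet A → ∃ P : ℝ → Set Ω,
    (∀ t, MeasurableSet (P t)) ∧ (∀ t, P t ⊆ A) ∧ Monotone P ∧
    P 0 = ∅ ∧ P 1 = A ∧
    ∀ t, 0 ≤ t → t ≤ 1 → ∀ j, rv (ν j) (P t) = t * rv (ν j) A

lemma half_zero (ν : Fin 0 → Measure Ω) : Half ν :=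
  fun _ _ => ⟨∅, empty_subset _, MeasurableSet.empty, fun j => j.elim0⟩

/-- dyadic construction of a monotone family from halving. -/
lemma fam_of_half {m : ℕ} (ν : Fin m → Measure Ω) (hfin : ∀ j, IsFiniteMeasure (ν j))
    (hH : Half ν) : Fam ν := by
  intro A hA
  have hf' : ∀ S : Set Ω, ∃ B, B ⊆ S ∧ MeasurableSet B ∧
      (MeasurableSet S → ∀ j, rv (ν j) B = rv (ν j) S / 2) := by
    intro S
    by_cases hS : MeasurableSet S
    · obtain ⟨B, h1, h2, h3⟩ := hH S hS
      exact ⟨B, h1, h2, fun _ => h3⟩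
    · exact ⟨∅, empty_subset _, .empty, fun h => absurd h hS⟩
  choose hf hf1 hf2 hf3 using hf'
  let g : ℕ → ℕ → Set Ω := fun n => Nat.rec
    (fun k => if k = 0 then (∅ : Set Ω) else A)
    (fun _ gp k => if k % 2 = 0 then gp (k / 2)
      else gp (k / 2) ∪ hf (gp (k / 2 + 1) \ gp (k / 2)))
    n
  have g0 : ∀ k, g 0 k = if k = 0 then (∅ : Set Ω) else A := fun _ => rfl
  have gs : ∀ n k, g (n + 1) k = if k % 2 = 0 then g n (k / 2)
      else g n (k / 2) ∪ hf (g n (k / 2 + 1) \ g n (k / 2)) := fun _ _ => rfl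
  have hpow2 : ∀ n : ℕ, (2 : ℕ) ^ (n + 1) = 2 * 2 ^ n := fun n => by ring
  have inv : ∀ n, (∀ k, MeasurableSet (g n k)) ∧ (∀ k, g n k ⊆ A) ∧
      (∀ k, g n k ⊆ g n (k + 1)) ∧ (g n 0 = ∅) ∧ (∀ k, 2 ^ n ≤ k → g n k = A) ∧
      (∀ k, k ≤ 2 ^ n → ∀ j, rv (ν j) (g n k) = (k : ℝ) / 2 ^ n * rv (ν j) A) := by
    intro n
    induction n with
    | zero =>
      refine ⟨?_, ?_, ?_, ?_, ?_, ?_⟩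
      · intro k; rw [g0]; split_ifs
        exacts [MeasurableSet.empty, hA]
      · intro k; rw [g0]; split_ifs
        exacts [empty_subset _, subset_rfl]
      · intro k; rw [g0, g0]
        by_cases hk : k = 0
        · simp [hk]
        · rw [if_neg hk, if_neg (Nat.succ_ne_zero k)]
      · rw [g0]; simp
      · intro k hk; rw [g0, if_neg (by omega)]
      · intro k hk j
        rw [g0]
        simp only [pow_zero] at hk ⊢
        interval_cases k
        · simp [rv_empty]
        · simp
    | succ n IH =>
      obtain ⟨Im, IA, Ich, I0, Itop, Ival⟩ := IH
      have gmono : Monotone (g n) := monotone_nat_of_le_succ Ich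
      have hDm : ∀ q, MeasurableSet (g n (q + 1) \ g n q) := fun q => (Im _).diff (Im _)
      have hBsub : ∀ q, hf (g n (q + 1) \ g n q) ⊆ A :=
        fun q => (hf1 _).trans (diff_subset.trans (IA _))
      have meas' : ∀ k, MeasurableSet (g (n + 1) k) := by
        intro k; rw [gs]; split_ifs
        exacts [Im _, (Im _).union (hf2 _)]
      have subA' : ∀ k, g (n + 1) k ⊆ A := by
        intro k; rw [gs]; split_ifs
        exacts [IA _, union_subset (IA _) (hBsub _)]
      have chain' : ∀ k, g (n + 1) k ⊆ g (n + 1) (k + 1) := by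
        intro k
        rcases Nat.even_or_odd k with hk | hk
        · have h1 : k % 2 = 0 := Nat.even_iff.mp hk
          have h2 : (k + 1) % 2 ≠ 0 := by omega
          have h3 : (k + 1) / 2 = k / 2 := by omega
          rw [gs, gs, if_pos h1, if_neg h2, h3]
          exact subset_union_left
        · have h1 : k % 2 ≠ 0 := by
            have := Nat.odd_iff.mp hk; omega
          have h2 : (k + 1) % 2 = 0 := by
            have := Nat.odd_iff.mp hk; omega
          have h3 : (k + 1) / 2 = k / 2 + 1 := by
            have := Nat.odd_iff.mp hk; omega
          rw [gs, gs, if_neg h1, if_pos h2, h3]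
          exact union_subset (Ich _) ((hf1 _).trans diff_subset)
      have zero' : g (n + 1) 0 = ∅ := by
        rw [gs]; norm_num [I0]
      have top' : ∀ k, 2 ^ (n + 1) ≤ k → g (n + 1) k = A := by
        intro k hk
        rw [hpow2] at hk
        rcases Nat.even_or_odd k with he | he
        · have h1 : k % 2 = 0 := Nat.even_iff.mp he
          rw [gs, if_pos h1]
          exact Itop _ (by omega)
        · have h1 : k % 2 ≠ 0 := by have := Nat.odd_iff.mp he; omega
          rw [gs, if_neg h1]
          have h4 : g n (k / 2) = A := Itop _ (by omega)
          refine subset_antisymm (union_subset (IA _) (hBsub _)) ?_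
          exact fun x hx => Set.mem_union_left _ (h4.symm ▸ hx)
      have val' : ∀ k, k ≤ 2 ^ (n + 1) →
          ∀ j, rv (ν j) (g (n + 1) k) = (k : ℝ) / 2 ^ (n + 1) * rv (ν j) A := by
        intro k hk j
        haveI := hfin j
        rw [hpow2] at hk
        have hcast : ((2 : ℕ) : ℝ) ^ (n + 1) = 2 ^ n * 2 := by
          push_cast; rw [pow_succ]
        rcases Nat.even_or_odd k with he | he
        · have h1 : k % 2 = 0 := Nat.even_iff.mp he
          have hq : k = 2 * (k / 2) := by omega
          rw [gs, if_pos h1, Ival _ (by omega) j]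
          have : (k : ℝ) = 2 * (k / 2 : ℕ) := by
            rw [hq]; push_cast [Nat.mul_div_cancel_left _ (by norm_num : 0 < 2)]; ring
          rw [this, pow_succ]
          have h2n : (2 : ℝ) ^ n ≠ 0 := by positivity
          field_simp
        · have h1 : k % 2 ≠ 0 := by have := Nat.odd_iff.mp he; omega
          have hq : k = 2 * (k / 2) + 1 := by have := Nat.odd_iff.mp he; omega
          have hq1 : k / 2 + 1 ≤ 2 ^ n := by omega
          have hdisj : Disjoint (g n (k / 2)) (hf (g n (k / 2 + 1) \ g n (k / 2))) :=
            disjoint_sdiff_self_right.mono_right (hf1 _)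
          rw [gs, if_neg h1, rv_union _ (hf2 _) hdisj, Ival _ (by omega) j,
            hf3 _ (hDm _) j, rv_diff _ (Im _) (gmono (Nat.le_succ _)),
            Ival _ hq1 j, Ival _ (by omega) j]
          have hk' : (k : ℝ) = 2 * (k / 2 : ℕ) + 1 := by
            conv_lhs => rw [hq]
            push_cast; ring
          rw [hk', pow_succ]
          have h2n : (2 : ℝ) ^ n ≠ 0 := by positivity
          field_simp
          push_cast
          ring
      exact ⟨meas', subA', chain', zero', top', val'⟩
  have gmono : ∀ n, Monotone (g n) := fun n => monotone_nat_of_le_succ (inv n).2.2.1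
  have hcross : ∀ n k, g n k = g (n + 1) (2 * k) := by
    intro n k
    rw [gs]
    norm_num [Nat.mul_div_cancel_left k (by norm_num : 0 < 2)]
  refine ⟨fun t => ⋃ n, g n ⌊t * 2 ^ n⌋₊, fun t => MeasurableSet.iUnion (fun n => (inv n).1 _),
    fun t => iUnion_subset (fun n => (inv n).2.1 _), ?_, ?_, ?_, ?_⟩
  · intro s t hst
    refine iUnion_mono fun n => gmono n (Nat.floor_mono ?_)
    have : (0 : ℝ) ≤ 2 ^ n := by positivity
    nlinarith
  · have h0 : ∀ n : ℕ, ⌊(0 : ℝ) * 2 ^ n⌋₊ = 0 := by intro n; norm_num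
    simp only [h0]
    simp [fun n => (inv n).2.2.2.1]
  · have h1 : ∀ n : ℕ, g n ⌊(2 : ℝ) ^ n⌋₊ = A := by
      intro n
      have h : ((2 : ℝ)) ^ n = ((2 ^ n : ℕ) : ℝ) := by push_cast; ring
      rw [h, Nat.floor_natCast]
      exact (inv n).2.2.2.2.1 _ le_rfl
    simp only [one_mul, h1, iUnion_const]
  · intro t ht0 ht1 j
    haveI := hfin j
    have hseqmono : Monotone (fun n => g n ⌊t * 2 ^ n⌋₊) := by
      apply monotone_nat_of_le_succ
      intro n
      rw [hcross n]
      apply gmono (n + 1)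
      rw [Nat.le_floor_iff (by positivity)]
      push_cast
      have h1 : (⌊t * 2 ^ n⌋₊ : ℝ) ≤ t * 2 ^ n := Nat.floor_le (by positivity)
      rw [pow_succ]
      nlinarith
    have hlim := rv_iUnion (ν j) hseqmono
    have hval : ∀ n, rv (ν j) (g n ⌊t * 2 ^ n⌋₊) = (⌊t * 2 ^ n⌋₊ : ℝ) / 2 ^ n * rv (ν j) A := by
      intro n
      refine (inv n).2.2.2.2.2 _ ?_ j
      have : t * 2 ^ n ≤ ((2 ^ n : ℕ) : ℝ) := by
        push_cast
        nlinarith [pow_pos (two_pos (α := ℝ)) n]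
      exact Nat.floor_le_of_le this
    have hnum : Tendsto (fun n => (⌊t * 2 ^ n⌋₊ : ℝ) / 2 ^ n * rv (ν j) A) atTop
        (𝓝 (t * rv (ν j) A)) := by
      apply Tendsto.mul_const
      have hub : ∀ n : ℕ, (⌊t * 2 ^ n⌋₊ : ℝ) / 2 ^ n ≤ t := by
        intro n
        rw [div_le_iff₀ (by positivity)]
        exact Nat.floor_le (by positivity)
      have hlb : ∀ n : ℕ, t - (1 / 2 : ℝ) ^ n ≤ (⌊t * 2 ^ n⌋₊ : ℝ) / 2 ^ n := by
        intro n
        rw [sub_le_iff_le_add, div_add' _ _ _ (by positivity : ((2:ℝ)^n) ≠ 0)]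
        rw [le_div_iff₀ (by positivity)]
        have := Nat.sub_one_lt_floor (t * 2 ^ n)
        have hp : (1 / 2 : ℝ) ^ n * 2 ^ n = 1 := by
          rw [← mul_pow]; norm_num
        nlinarith
      have hl : Tendsto (fun n : ℕ => t - (1 / 2 : ℝ) ^ n) atTop (𝓝 t) := by
        have := tendsto_pow_atTop_nhds_zero_of_lt_one
          (by norm_num : (0:ℝ) ≤ 1/2) (by norm_num : (1/2:ℝ) < 1)
        simpa using tendsto_const_nhds.sub this
      exact tendsto_of_tendsto_of_tendsto_of_le_of_le hl tendsto_const_nhds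
        (fun n => hlb n) (fun n => hub n)
    rw [funext hval] at hlim
    exact tendsto_nhds_unique hlim hnum

/-- the exchange lemma. -/
lemma exchange {m : ℕ} (ν : Fin m → Measure Ω) (hfin : ∀ j, IsFiniteMeasure (ν j))
    (σ : Measure Ω) [IsFiniteMeasure σ] (hF : Fam ν) (hSP : SP σ)
    {X Y : Set Ω} (hX : MeasurableSet X) (hY : MeasurableSet Y) (hd : Disjoint X Y)
    {c : ℝ} (hc1 : rv σ Y ≤ c) (hc2 : c ≤ rv σ X) :
    ∃ B t, 0 ≤ t ∧ t ≤ 1 ∧ B ⊆ X ∪ Y ∧ MeasurableSet B ∧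
      (∀ j, rv (ν j) B = (1 - t) * rv (ν j) X + t * rv (ν j) Y) ∧ rv σ B = c := by
  obtain ⟨P, hPmeas, hPsub, hPmono, hP0, hP1, hPval⟩ := hF X hX
  obtain ⟨Q, hQmeas, hQsub, hQmono, hQ0, hQ1, hQval⟩ := hF Y hY
  set S : Set ℝ := {s | 0 ≤ s ∧ s ≤ 1 ∧ rv σ X - rv σ (P s) + rv σ (Q s) ≤ c} with hSdef
  have h1S : (1 : ℝ) ∈ S := by
    refine ⟨zero_le_one, le_rfl, ?_⟩
    rw [hP1, hQ1]; linarith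
  have hSne : S.Nonempty := ⟨1, h1S⟩
  have hSbdd : BddBelow S := ⟨0, fun x hx => hx.1⟩
  set t := sInf S with ht
  have ht0 : 0 ≤ t := le_csInf hSne (fun x hx => hx.1)
  have ht1 : t ≤ 1 := csInf_le hSbdd h1S
  -- lower approximating sequence
  set sl : ℕ → ℝ := fun n => t - t * (1 / ((n : ℝ) + 1)) with hsl
  have hfrac_pos : ∀ n : ℕ, 0 < 1 / ((n : ℝ) + 1) := fun n => by positivity
  have hfrac_le : ∀ n : ℕ, 1 / ((n : ℝ) + 1) ≤ 1 := fun n => by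
    rw [div_le_one (by positivity)]; linarith [Nat.cast_nonneg (α := ℝ) n]
  have hsl0 : ∀ n, 0 ≤ sl n := fun n => by
    have h1 := hfrac_le n
    have h2 := (hfrac_pos n).le
    simp only [hsl]
    nlinarith
  have hsl_le : ∀ n, sl n ≤ t := fun n => by
    have := (hfrac_pos n).le
    simp only [hsl]
    nlinarith
  have hsl_mono : Monotone sl := by
    intro a b hab
    have h1 : 1 / ((b : ℝ) + 1) ≤ 1 / ((a : ℝ) + 1) := by
      apply one_div_le_one_div_of_le (by positivity)
      have := Nat.cast_le (α := ℝ).mpr hab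
      linarith
    simp only [hsl]
    nlinarith
  have hsl_tendsto : Tendsto sl atTop (𝓝 t) := by
    have h : Tendsto (fun n : ℕ => 1 / ((n : ℝ) + 1)) atTop (𝓝 0) := tendsto_one_div_add_atTop_nhds_zero_nat
    have := tendsto_const_nhds (x := t) (f := atTop (α := ℕ)).sub (h.const_mul t)
    simpa [hsl, mul_comm] using (tendsto_const_nhds (x := t) (f := atTop (α := ℕ))).sub
      (h.const_mul t)
  have hsl1 : ∀ n, sl n ≤ 1 := fun n => (hsl_le n).trans ht1
  set Pm := ⋃ n, P (sl n) with hPm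
  set Qm := ⋃ n, Q (sl n) with hQm
  have measPm : MeasurableSet Pm := MeasurableSet.iUnion (fun n => hPmeas _)
  have measQm : MeasurableSet Qm := MeasurableSet.iUnion (fun n => hQmeas _)
  have hPm_mono : Monotone (fun n => P (sl n)) := fun a b h => hPmono (hsl_mono h)
  have hQm_mono : Monotone (fun n => Q (sl n)) := fun a b h => hQmono (hsl_mono h)
  have hσPm : Tendsto (fun n => rv σ (P (sl n))) atTop (𝓝 (rv σ Pm)) := rv_iUnion σ hPm_mono
  have hσQm : Tendsto (fun n => rv σ (Q (sl n))) atTop (𝓝 (rv σ Qm)) := rv_iUnion σ hQm_mono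
  have rvPm : ∀ j, rv (ν j) Pm = t * rv (ν j) X := by
    intro j
    haveI := hfin j
    have h1 := rv_iUnion (ν j) hPm_mono
    have h2 : ∀ n, rv (ν j) (P (sl n)) = sl n * rv (ν j) X :=
      fun n => hPval _ (hsl0 n) (hsl1 n) j
    rw [funext h2] at h1
    exact tendsto_nhds_unique h1 (hsl_tendsto.mul_const _)
  have rvQm : ∀ j, rv (ν j) Qm = t * rv (ν j) Y := by
    intro j
    haveI := hfin j
    have h1 := rv_iUnion (ν j) hQm_mono
    have h2 : ∀ n, rv (ν j) (Q (sl n)) = sl n * rv (ν j) Y :=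
      fun n => hQval _ (hsl0 n) (hsl1 n) j
    rw [funext h2] at h1
    exact tendsto_nhds_unique h1 (hsl_tendsto.mul_const _)
  -- the liminf inequality
  have hm_ge : c ≤ rv σ X - rv σ Pm + rv σ Qm := by
    rcases eq_or_lt_of_le ht0 with ht0' | ht0'
    · have hsl_eq : ∀ n, sl n = 0 := fun n => by
        simp only [hsl, ← ht0']; ring
      have hPm_eq : Pm = ∅ := by
        rw [hPm]
        simp [hsl_eq, hP0]
      have hQm_eq : Qm = ∅ := by
        rw [hQm]
        simp [hsl_eq, hQ0]
      rw [hPm_eq, hQm_eq, rv_empty]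
      linarith
    · have hns : ∀ n, sl n ∉ S := by
        intro n hn
        have h1 : t ≤ sl n := csInf_le hSbdd hn
        have h2 : sl n < t := by
          have := hfrac_pos n
          simp only [hsl]
          nlinarith
        linarith
      have hgt : ∀ n, c ≤ rv σ X - rv σ (P (sl n)) + rv σ (Q (sl n)) := by
        intro n
        by_contra hcon
        push_neg at hcon
        exact hns n ⟨hsl0 n, hsl1 n, hcon.le⟩
      have htend : Tendsto (fun n => rv σ X - rv σ (P (sl n)) + rv σ (Q (sl n))) atTop
          (𝓝 (rv σ X - rv σ Pm + rv σ Qm)) :=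
        (tendsto_const_nhds.sub hσPm).add hσQm
      exact ge_of_tendsto htend (Eventually.of_forall hgt)
  -- upper approximating sequence
  have hw' : ∀ n : ℕ, ∃ x, x ∈ S ∧ x < t + 1 / ((n : ℝ) + 1) := by
    intro n
    apply exists_lt_of_csInf_lt hSne
    rw [← ht]
    linarith [hfrac_pos n]
  choose u hu1 hu2 using hw'
  let w : ℕ → ℝ := fun n => Nat.rec (u 0) (fun n wn => min wn (u (n + 1))) n
  have hw0 : w 0 = u 0 := rfl
  have hws : ∀ n, w (n + 1) = min (w n) (u (n + 1)) := fun _ => rfl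
  have hwS : ∀ n, w n ∈ S := by
    intro n
    induction n with
    | zero => exact hu1 0
    | succ n IH =>
      rw [hws]
      rcases le_total (w n) (u (n + 1)) with h | h
      · rwa [min_eq_left h]
      · rw [min_eq_right h]; exact hu1 _
  have hw_anti : Antitone w :=
    antitone_nat_of_succ_le (fun n => by rw [hws]; exact min_le_left _ _)
  have hw_ge : ∀ n, t ≤ w n := fun n => csInf_le hSbdd (hwS n)
  have hw_le_u : ∀ n, w n ≤ u n := by
    intro n
    cases n with
    | zero => exact le_of_eq hw0
    | succ n => rw [hws]; exact min_le_right _ _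
  have hw_tendsto : Tendsto w atTop (𝓝 t) := by
    have hup : Tendsto (fun n : ℕ => t + 1 / ((n : ℝ) + 1)) atTop (𝓝 t) := by
      have h : Tendsto (fun n : ℕ => 1 / ((n : ℝ) + 1)) atTop (𝓝 0) := tendsto_one_div_add_atTop_nhds_zero_nat
      simpa using (tendsto_const_nhds (x := t) (f := atTop (α := ℕ))).add h
    exact tendsto_of_tendsto_of_tendsto_of_le_of_le tendsto_const_nhds hup hw_ge
      (fun n => ((hw_le_u n).trans (hu2 n).le))
  have hw1 : ∀ n, w n ≤ 1 := fun n => (hwS n).2.1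
  have hw0' : ∀ n, 0 ≤ w n := fun n => (hwS n).1
  set Pp := ⋂ n, P (w n) with hPp
  have measPp : MeasurableSet Pp := MeasurableSet.iInter (fun n => hPmeas _)
  have hPp_anti : Antitone (fun n => P (w n)) := fun a b h => hPmono (hw_anti h)
  have hσPp : Tendsto (fun n => rv σ (P (w n))) atTop (𝓝 (rv σ Pp)) :=
    rv_iInter σ (fun n => hPmeas _) hPp_anti
  have hPmPp : Pm ⊆ Pp := by
    refine iUnion_subset fun k => subset_iInter fun n => hPmono ?_
    exact (hsl_le k).trans (hw_ge n)
  have rvPp : ∀ j, rv (ν j) Pp = t * rv (ν j) X := by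
    intro j
    haveI := hfin j
    have hub : rv (ν j) Pp ≤ t * rv (ν j) X := by
      have htendn : Tendsto (fun n => rv (ν j) (P (w n))) atTop (𝓝 (t * rv (ν j) X)) := by
        have h2 : ∀ n, rv (ν j) (P (w n)) = w n * rv (ν j) X :=
          fun n => hPval _ (hw0' n) (hw1 n) j
        rw [funext h2]
        exact hw_tendsto.mul_const _
      refine ge_of_tendsto htendn (Eventually.of_forall fun n => ?_)
      exact rv_mono (ν j) (iInter_subset _ n)
    have hlb : t * rv (ν j) X ≤ rv (ν j) Pp := by
      have hsubs : P t ⊆ Pp := subset_iInter fun n => hPmono (hw_ge n)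
      have := rv_mono (ν j) hsubs
      rwa [hPval t ht0 ht1 j] at this
    linarith
  -- key inequality from upper sequence
  have hQmsub : ∀ n, Qm ⊆ Q (w n) := by
    intro n
    exact iUnion_subset fun k => hQmono ((hsl_le k).trans (hw_ge n))
  have key : rv σ X - rv σ Pp + rv σ Qm ≤ c := by
    have h1 : ∀ n, rv σ X - rv σ (P (w n)) + rv σ Qm ≤ c := by
      intro n
      have h2 := (hwS n).2.2
      have h3 : rv σ Qm ≤ rv σ (Q (w n)) := rv_mono σ (hQmsub n)
      linarith
    have htendn : Tendsto (fun n => rv σ X - rv σ (P (w n)) + rv σ Qm) atTop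
        (𝓝 (rv σ X - rv σ Pp + rv σ Qm)) :=
      (tendsto_const_nhds.sub hσPp).add tendsto_const_nhds
    exact le_of_tendsto htendn (Eventually.of_forall h1)
  -- patch inside the jump set
  set J := Pp \ Pm with hJ
  have measJ : MeasurableSet J := measPp.diff measPm
  have rvJ : rv σ J = rv σ Pp - rv σ Pm := rv_diff σ measPm hPmPp
  set x := rv σ X - rv σ Pm + rv σ Qm - c with hx
  have hx0 : 0 ≤ x := by simp only [hx]; linarith
  have hxJ : x ≤ rv σ J := by rw [rvJ]; simp only [hx]; linarith
  obtain ⟨R, hRJ, measR, hRv⟩ := hSP J measJ x hx0 hxJ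
  have hPpX : Pp ⊆ X := (iInter_subset _ 0).trans (hPsub _)
  have hPmX : Pm ⊆ X := hPmPp.trans hPpX
  have hRX : R ⊆ X := hRJ.trans (diff_subset.trans hPpX)
  have hQmY : Qm ⊆ Y := iUnion_subset fun n => hQsub _
  have hPmR_X : Pm ∪ R ⊆ X := union_subset hPmX hRX
  have hdisjPmR : Disjoint Pm R := disjoint_sdiff_self_right.mono_right hRJ
  have measPmR : MeasurableSet (Pm ∪ R) := measPm.union measR
  refine ⟨(X \ (Pm ∪ R)) ∪ Qm, t, ht0, ht1, ?_, ?_, ?_, ?_⟩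
  · exact union_subset (diff_subset.trans subset_union_left)
      (hQmY.trans subset_union_right)
  · exact (hX.diff measPmR).union measQm
  · intro j
    haveI := hfin j
    have hrvR : rv (ν j) R = 0 := by
      have h1 : rv (ν j) R ≤ rv (ν j) J := rv_mono (ν j) hRJ
      have h2 : rv (ν j) J = rv (ν j) Pp - rv (ν j) Pm := rv_diff (ν j) measPm hPmPp
      rw [rvPp j, rvPm j] at h2
      have h3 := rv_nonneg (ν j) R
      linarith
    have hPmRv : rv (ν j) (Pm ∪ R) = t * rv (ν j) X := by
      rw [rv_union (ν j) measR hdisjPmR, rvPm j, hrvR, add_zero]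
    have hdiffv : rv (ν j) (X \ (Pm ∪ R)) = rv (ν j) X - t * rv (ν j) X := by
      rw [rv_diff (ν j) measPmR hPmR_X, hPmRv]
    have hdisjXQ : Disjoint (X \ (Pm ∪ R)) Qm :=
      (hd.mono_left diff_subset).mono_right hQmY
    rw [rv_union (ν j) measQm hdisjXQ, hdiffv, rvQm j]
    ring
  · have hPmRσ : rv σ (Pm ∪ R) = rv σ Pm + x := by
      rw [rv_union σ measR hdisjPmR, hRv]
    have hdiffσ : rv σ (X \ (Pm ∪ R)) = rv σ X - (rv σ Pm + x) := by
      rw [rv_diff σ measPmR hPmR_X, hPmRσ]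
    have hdisjXQ : Disjoint (X \ (Pm ∪ R)) Qm :=
      (hd.mono_left diff_subset).mono_right hQmY
    rw [rv_union σ measQm hdisjXQ, hdiffσ]
    simp only [hx]
    ring

/-- halving extends by one more measure. -/
lemma half_extend {m : ℕ} (ν : Fin m → Measure Ω) (hfin : ∀ j, IsFiniteMeasure (ν j))
    (σ : Measure Ω) [IsFiniteMeasure σ] (hF : Fam ν) (hSP : SP σ) :
    ∀ A, MeasurableSet A → ∃ B, B ⊆ A ∧ MeasurableSet B ∧
      (∀ j, rv (ν j) B = rv (ν j) A / 2) ∧ rv σ B = rv σ A / 2 := by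
  intro A hA
  obtain ⟨P, hPmeas, hPsub, hPmono, hP0, hP1, hPval⟩ := hF A hA
  set B₀ := P (1 / 2) with hB₀
  have hB₀m : MeasurableSet B₀ := hPmeas _
  have hB₀A : B₀ ⊆ A := hPsub _
  have hB₀v : ∀ j, rv (ν j) B₀ = rv (ν j) A / 2 := by
    intro j
    rw [hB₀, hPval (1 / 2) (by norm_num) (by norm_num) j]
    ring
  set C := A \ B₀ with hC
  have hCm : MeasurableSet C := hA.diff hB₀m
  have hCv : ∀ j, rv (ν j) C = rv (ν j) A / 2 := by
    intro j
    haveI := hfin j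
    rw [hC, rv_diff (ν j) hB₀m hB₀A, hB₀v j]
    ring
  have hdisj : Disjoint B₀ C := disjoint_sdiff_self_right
  have hunion : B₀ ∪ C = A := union_diff_cancel hB₀A
  have hsum : rv σ B₀ + rv σ C = rv σ A := by
    have h := rv_union σ hCm hdisj
    rw [hunion] at h
    linarith
  rcases le_total (rv σ C) (rv σ A / 2) with h | h
  · obtain ⟨B, t, _, _, hBsub, hBm, hBν, hBσ⟩ :=
      exchange ν hfin σ hF hSP hB₀m hCm hdisj (c := rv σ A / 2) h (by linarith)
    rw [hunion] at hBsub
    refine ⟨B, hBsub, hBm, fun j => ?_, hBσ⟩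
    rw [hBν j, hB₀v j, hCv j]
    ring
  · obtain ⟨B, t, _, _, hBsub, hBm, hBν, hBσ⟩ :=
      exchange ν hfin σ hF hSP hCm hB₀m hdisj.symm (c := rv σ A / 2) (by linarith) h
    rw [union_comm, hunion] at hBsub
    refine ⟨B, hBsub, hBm, fun j => ?_, hBσ⟩
    rw [hBν j, hB₀v j, hCv j]
    ring

lemma half_all (m : ℕ) (ν : Fin m → Measure Ω) (hfin : ∀ j, IsFiniteMeasure (ν j))
    (hSP : ∀ j, SP (ν j)) : Half ν := by
  induction m with
  | zero => exact half_zero ν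
  | succ m IH =>
    have hF : Fam (fun j : Fin m => ν j.castSucc) :=
      fam_of_half _ (fun j => hfin _) (IH _ (fun j => hfin _) (fun j => hSP _))
    haveI := hfin (Fin.last m)
    intro A hA
    obtain ⟨B, hBA, hBm, hB1, hB2⟩ :=
      half_extend _ (fun j => hfin _) (ν (Fin.last m)) hF (hSP (Fin.last m)) A hA
    refine ⟨B, hBA, hBm, fun j => ?_⟩
    refine Fin.lastCases ?_ ?_ j
    · exact hB2
    · exact fun i => hB1 i

theorem positive_main (m : ℕ) (ν : Fin m → Measure Ω) (hfin : ∀ j, IsFiniteMeasure (ν j))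
    (hSP : ∀ j, SP (ν j)) {α : ℝ} (h0 : 0 ≤ α) (h1 : α ≤ 1) :
    ∃ E : Set Ω, MeasurableSet E ∧ ∀ j, rv (ν j) E = α * rv (ν j) Set.univ := by
  obtain ⟨P, hPm, _, _, _, _, hPv⟩ :=
    fam_of_half ν hfin (half_all m ν hfin hSP) Set.univ MeasurableSet.univ
  exact ⟨P α, hPm α, hPv α h0 h1⟩

end LyapAux

open LyapAux

/-- Weak form of Lyapunov's convexity theorem for finitely many non-atomic finite
signed measures. -/
theorem stmt8 {Ω : Type*} [MeasurableSpace Ω] (k : ℕ)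
    (μ : Fin k → MeasureTheory.SignedMeasure Ω)
    (hna : ∀ i, ∀ A : Set Ω, MeasurableSet A → μ i A ≠ 0 →
      ∃ B ⊆ A, MeasurableSet B ∧ μ i B ≠ 0 ∧ μ i B ≠ μ i A) :
    ∀ α : ℝ, α ∈ Set.Icc (0 : ℝ) 1 →
      ∃ E : Set Ω, MeasurableSet E ∧ ∀ i, μ i E = α * μ i Set.univ := by
  intro α hα
  classical
  choose isets hi1 hi2 hi3 hpos hneg using fun i => (μ i).toJordanDecomposition_spec
  set pos : Fin k → Measure Ω := fun i => (μ i).toJordanDecomposition.posPart with hposdef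
  set neg : Fin k → Measure Ω := fun i => (μ i).toJordanDecomposition.negPart with hnegdef
  have hfinpos : ∀ i, IsFiniteMeasure (pos i) := fun i =>
    (μ i).toJordanDecomposition.posPart_finite
  have hfinneg : ∀ i, IsFiniteMeasure (neg i) := fun i =>
    (μ i).toJordanDecomposition.negPart_finite
  have hposv : ∀ i A, MeasurableSet A → rv (pos i) A = μ i (isets i ∩ A) := by
    intro i A hA
    rw [hposdef]
    dsimp only
    rw [hpos i, rv]
    rw [SignedMeasure.toMeasureOfZeroLE_apply _ (hi2 i) (hi1 i) hA]
    simp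
  have hnegv : ∀ i A, MeasurableSet A → rv (neg i) A = -μ i ((isets i)ᶜ ∩ A) := by
    intro i A hA
    rw [hnegdef]
    dsimp only
    rw [hneg i, rv]
    rw [SignedMeasure.toMeasureOfLEZero_apply _ (hi3 i) (hi1 i).compl hA]
    simp
  have hval : ∀ i A, MeasurableSet A → μ i A = rv (pos i) A - rv (neg i) A := by
    intro i A hA
    rw [hposv i A hA, hnegv i A hA]
    have h1 : μ i (isets i ∩ A ∪ (isets i)ᶜ ∩ A) = μ i (isets i ∩ A) + μ i ((isets i)ᶜ ∩ A) :=
      VectorMeasure.of_union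
        (Disjoint.mono inf_le_left inf_le_left disjoint_compl_right)
        ((hi1 i).inter hA) ((hi1 i).compl.inter hA)
    have h2 : isets i ∩ A ∪ (isets i)ᶜ ∩ A = A := by
      rw [← Set.union_inter_distrib_right, Set.union_compl_self, Set.univ_inter]
    rw [h2] at h1
    linarith
  have hNApos : ∀ i, NA (pos i) := by
    intro i A hA hA0
    rw [hposv i A hA] at hA0
    obtain ⟨B, hBsub, hBm, hB0, hBne⟩ :=
      hna i (isets i ∩ A) ((hi1 i).inter hA) (ne_of_gt hA0)
    have hBi : B ⊆ isets i := hBsub.trans Set.inter_subset_left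
    have hBpos : 0 < μ i B :=
      lt_of_le_of_ne
        (VectorMeasure.nonneg_of_zero_le_restrict _
          (VectorMeasure.zero_le_restrict_subset _ (hi1 i) hBi (hi2 i)))
        (Ne.symm hB0)
    have hdiffpos : 0 ≤ μ i ((isets i ∩ A) \ B) :=
      VectorMeasure.nonneg_of_zero_le_restrict _
        (VectorMeasure.zero_le_restrict_subset _ (hi1 i)
          (Set.diff_subset.trans Set.inter_subset_left) (hi2 i))
    have hadd : μ i B + μ i ((isets i ∩ A) \ B) = μ i (isets i ∩ A) :=
      VectorMeasure.of_add_of_diff hBm ((hi1 i).inter hA) hBsub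
    have hBeq : isets i ∩ B = B := Set.inter_eq_self_of_subset_right hBi
    refine ⟨B, hBsub.trans Set.inter_subset_right, hBm, ?_, ?_⟩
    · rw [hposv i B hBm, hBeq]
      exact hBpos
    · rw [hposv i B hBm, hposv i A hA, hBeq]
      have hle : μ i B ≤ μ i (isets i ∩ A) := by linarith
      exact lt_of_le_of_ne hle hBne
  have hNAneg : ∀ i, NA (neg i) := by
    intro i A hA hA0
    rw [hnegv i A hA] at hA0
    obtain ⟨B, hBsub, hBm, hB0, hBne⟩ :=
      hna i ((isets i)ᶜ ∩ A) ((hi1 i).compl.inter hA) (by intro h; rw [h] at hA0; linarith)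
    have hBi : B ⊆ (isets i)ᶜ := hBsub.trans Set.inter_subset_left
    have hBneg : μ i B < 0 :=
      lt_of_le_of_ne
        (VectorMeasure.nonpos_of_restrict_le_zero _
          (VectorMeasure.restrict_le_zero_subset _ (hi1 i).compl hBi (hi3 i)))
        hB0
    have hdiffneg : μ i (((isets i)ᶜ ∩ A) \ B) ≤ 0 :=
      VectorMeasure.nonpos_of_restrict_le_zero _
        (VectorMeasure.restrict_le_zero_subset _ (hi1 i).compl
          (Set.diff_subset.trans Set.inter_subset_left) (hi3 i))
    have hadd : μ i B + μ i (((isets i)ᶜ ∩ A) \ B) = μ i ((isets i)ᶜ ∩ A) :=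
      VectorMeasure.of_add_of_diff hBm ((hi1 i).compl.inter hA) hBsub
    have hBeq : (isets i)ᶜ ∩ B = B := Set.inter_eq_self_of_subset_right hBi
    refine ⟨B, hBsub.trans Set.inter_subset_right, hBm, ?_, ?_⟩
    · rw [hnegv i B hBm, hBeq]
      linarith
    · rw [hnegv i B hBm, hnegv i A hA, hBeq]
      have hle : μ i ((isets i)ᶜ ∩ A) ≤ μ i B := by linarith
      have hne : μ i ((isets i)ᶜ ∩ A) ≠ μ i B := fun h => hBne h.symm
      have := lt_of_le_of_ne hle hne
      linarith
  set ν : Fin (2 * k) → Measure Ω := fun j =>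
    if h : (j : ℕ) < k then pos ⟨j, h⟩
    else neg ⟨(j : ℕ) - k, by have := j.isLt; omega⟩ with hν
  have hfin : ∀ j, IsFiniteMeasure (ν j) := by
    intro j
    rw [hν]
    dsimp only
    split_ifs with h
    · exact hfinpos _
    · exact hfinneg _
  have hSP : ∀ j, SP (ν j) := by
    intro j
    rw [hν]
    dsimp only
    split_ifs with h
    · haveI := hfinpos ⟨(j : ℕ), h⟩
      exact sierpinski _ (hNApos _)
    · haveI := hfinneg (⟨(j : ℕ) - k, by have := j.isLt; omega⟩ : Fin k)
      exact sierpinski _ (hNAneg _)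
  obtain ⟨E, hEm, hEv⟩ := positive_main (2 * k) ν hfin hSP hα.1 hα.2
  refine ⟨E, hEm, fun i => ?_⟩
  have hik : (i : ℕ) < 2 * k := by have := i.isLt; omega
  have hik2 : k + (i : ℕ) < 2 * k := by have := i.isLt; omega
  have hp : rv (pos i) E = α * rv (pos i) Set.univ := by
    have h1 := hEv ⟨(i : ℕ), hik⟩
    have h2 : ν ⟨(i : ℕ), hik⟩ = pos i := by
      rw [hν]
      dsimp only
      rw [dif_pos (show ((⟨(i : ℕ), hik⟩ : Fin (2 * k)) : ℕ) < k from i.isLt)]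
    rwa [h2] at h1
  have hn : rv (neg i) E = α * rv (neg i) Set.univ := by
    have h1 := hEv ⟨k + (i : ℕ), hik2⟩
    have h2 : ν ⟨k + (i : ℕ), hik2⟩ = neg i := by
      rw [hν]
      dsimp only
      rw [dif_neg (show ¬((⟨k + (i : ℕ), hik2⟩ : Fin (2 * k)) : ℕ) < k by simp)]
      congr 1
      apply Fin.ext
      simp
    rwa [h2] at h1
  rw [hval i E hEm, hval i Set.univ MeasurableSet.univ, hp, hn]
  ring
end

section
/- Let q be an everywhere-positive probability mass function on a finite set X, q_u a probability mass function, and define the dual function D(λ) = λ·b − (1−λ)·log Z^†(λ) for λ ∈ [0,1), where Z^†(λ) = Σ_x q(x)^{1/(1-λ)} / q_u(x)^{λ/(1-λ)} and q_u is everywhere positive. Then D(λ) = min over probability mass functions p of [D_KL(p‖q) + λ·(b − D_KL(p‖q_u))]. -/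
open Real BigOperators

noncomputable section

variable {X : Type*} [Fintype X]

lemma klDiv_nonneg_aux (p r : X → ℝ) (hp : IsPMF p) (hr : ∀ x, 0 < r x)
    (hrs : ∑ x, r x = 1) : 0 ≤ klDiv p r := by
  have key : ∀ x, p x - r x ≤ p x * Real.log (p x / r x) := by
    intro x
    rcases eq_or_lt_of_le (hp.1 x) with h | h
    · simp [← h]
      linarith [(hr x).le]
    · have hlog : Real.log (r x / p x) ≤ r x / p x - 1 :=
        Real.log_le_sub_one_of_pos (div_pos (hr x) h)
      have h1 : p x * Real.log (r x / p x) ≤ p x * (r x / p x - 1) :=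
        mul_le_mul_of_nonneg_left hlog h.le
      have h2 : p x * (r x / p x - 1) = r x - p x := by field_simp
      have h3 : Real.log (p x / r x) = - Real.log (r x / p x) := by
        rw [← Real.log_inv, inv_div]
      nlinarith
  calc (0 : ℝ) = ∑ x, (p x - r x) := by rw [Finset.sum_sub_distrib, hp.2, hrs]; ring
    _ ≤ ∑ x, p x * Real.log (p x / r x) := Finset.sum_le_sum fun x _ => key x
    _ = klDiv p r := rfl

/-- The dual function of reverse KL-constrained unlearning equals the minimum of the
Lagrangian over the probability simplex. -/
theorem stmt11 [Nonempty X] (q qu : X → ℝ)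
    (hq : IsPMF q) (hqpos : ∀ x, 0 < q x)
    (hqu : IsPMF qu) (hqupos : ∀ x, 0 < qu x)
    (b lam : ℝ) (hlam0 : 0 ≤ lam) (hlam1 : lam < 1)
    (Z : ℝ) (hZ : Z = ∑ x, q x ^ (1 / (1 - lam)) / qu x ^ (lam / (1 - lam))) :
    IsLeast {v | ∃ p : X → ℝ, IsPMF p ∧ v = klDiv p q + lam * (b - klDiv p qu)}
      (lam * b - (1 - lam) * Real.log Z) := by
  have hl : (0:ℝ) < 1 - lam := by linarith
  set a : ℝ := 1 / (1 - lam) with ha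
  set c : ℝ := lam / (1 - lam) with hc
  have hZpos : 0 < Z := by
    rw [hZ]
    refine Finset.sum_pos (fun x _ => ?_) Finset.univ_nonempty
    exact div_pos (Real.rpow_pos_of_pos (hqpos x) a) (Real.rpow_pos_of_pos (hqupos x) c)
  set ps : X → ℝ := fun x => (q x ^ a / qu x ^ c) / Z with hps
  have hpspos : ∀ x, 0 < ps x := fun x =>
    div_pos (div_pos (Real.rpow_pos_of_pos (hqpos x) a) (Real.rpow_pos_of_pos (hqupos x) c)) hZpos
  have hpssum : ∑ x, ps x = 1 := by
    have : ∑ x, ps x = (∑ x, q x ^ a / qu x ^ c) / Z := by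
      rw [hps, Finset.sum_div]
    rw [this, ← hZ, div_self hZpos.ne']
  have hlogps : ∀ x, Real.log (ps x) = a * Real.log (q x) - c * Real.log (qu x) - Real.log Z := by
    intro x
    rw [hps]
    rw [Real.log_div (div_pos (Real.rpow_pos_of_pos (hqpos x) a)
          (Real.rpow_pos_of_pos (hqupos x) c)).ne' hZpos.ne',
      Real.log_div (Real.rpow_pos_of_pos (hqpos x) a).ne'
          (Real.rpow_pos_of_pos (hqupos x) c).ne',
      Real.log_rpow (hqpos x), Real.log_rpow (hqupos x)]
  -- key identity for any PMF p
  have key : ∀ p : X → ℝ, IsPMF p →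
      klDiv p q + lam * (b - klDiv p qu)
        = lam * b - (1 - lam) * Real.log Z + (1 - lam) * klDiv p ps := by
    intro p hp
    have point : ∀ x, p x * Real.log (p x / q x) - lam * (p x * Real.log (p x / qu x))
        = (1 - lam) * (p x * Real.log (p x / ps x)) - (1 - lam) * Real.log Z * p x := by
      intro x
      rcases eq_or_lt_of_le (hp.1 x) with h | h
      · simp [← h]
      · have e1 : Real.log (p x / q x) = Real.log (p x) - Real.log (q x) :=
          Real.log_div h.ne' (hqpos x).ne'
        have e2 : Real.log (p x / qu x) = Real.log (p x) - Real.log (qu x) :=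
          Real.log_div h.ne' (hqupos x).ne'
        have e3 : Real.log (p x / ps x) = Real.log (p x) - Real.log (ps x) :=
          Real.log_div h.ne' (hpspos x).ne'
        rw [e1, e2, e3, hlogps x]
        have hac : (1 - lam) * a = 1 := by rw [ha]; field_simp
        have hcc : (1 - lam) * c = lam := by rw [hc]; field_simp
        linear_combination (p x * Real.log (q x)) * hac - (p x * Real.log (qu x)) * hcc
    have sum_eq : klDiv p q - lam * klDiv p qu
        = (1 - lam) * klDiv p ps - (1 - lam) * Real.log Z := by
      calc klDiv p q - lam * klDiv p qu
          = ∑ x, (p x * Real.log (p x / q x) - lam * (p x * Real.log (p x / qu x))) := by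
            unfold klDiv; rw [Finset.mul_sum, ← Finset.sum_sub_distrib]
        _ = ∑ x, ((1 - lam) * (p x * Real.log (p x / ps x)) - (1 - lam) * Real.log Z * p x) :=
            Finset.sum_congr rfl fun x _ => point x
        _ = (1 - lam) * klDiv p ps - (1 - lam) * Real.log Z := by
            unfold klDiv
            rw [Finset.sum_sub_distrib, ← Finset.mul_sum, ← Finset.mul_sum,
              hp.2, mul_one]
    linarith
  constructor
  · refine ⟨ps, ⟨fun x => (hpspos x).le, hpssum⟩, ?_⟩
    rw [key ps ⟨fun x => (hpspos x).le, hpssum⟩]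
    have : klDiv ps ps = 0 := by
      unfold klDiv
      apply Finset.sum_eq_zero
      intro x _
      rw [div_self (hpspos x).ne', Real.log_one, mul_zero]
    rw [this, mul_zero, add_zero]
  · rintro v ⟨p, hp, rfl⟩
    rw [key p hp]
    have h0 : 0 ≤ klDiv p ps := klDiv_nonneg_aux p ps hp hpspos hpssum
    nlinarith
end
end
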